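/- (Generalized mean value theorem) Let 0 < α ≤ 1, a < b, and let φ : [a,b] → ℝ be continuously differentiable. Then the Caputo derivative ᶜD^α φ (based at a) extends continuously to [a,b] (with value 0 at a), and there exists ξ ∈ [a,b] such that φ(b) = φ(a) + (1/Γ(α+1)) · ᶜD^α φ(ξ) · (b−a)^α. -/

import Mathlib

open MeasureTheory intervalIntegral Set

/-- The Caputo fractional derivative of order `α` (0 < α ≤ 1) based at `a`,
written in terms of the (given, continuous) derivative `φ'`:
for `α < 1`, `ᶜD^α φ(t) = (1/Γ(1−α)) ∫ₐᵗ φ′(x)(t−x)^{−α} dx`, and `ᶜD¹φ = φ′`. -/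
noncomputable def caputoD (α a : ℝ) (φ' : ℝ → ℝ) (t : ℝ) : ℝ :=
  if α = 1 then φ' t
  else (1 / Real.Gamma (1 - α)) * ∫ x in a..t, φ' x * (t - x) ^ (-α)


private lemma rpow_meas {c : ℝ} (hc : c ≠ 0) : Measurable fun x : ℝ => x ^ c := by
  apply measurable_of_continuousOn_compl_singleton (0 : ℝ)
  exact continuousOn_of_forall_continuousAt fun x hx =>
    Real.continuousAt_rpow_const x c (Or.inl (by simpa using hx))

private lemma beta_real {s t : ℝ} (hs : 0 < s) (ht : 0 < t) :
    ∫ u in (0:ℝ)..1, u ^ (s - 1) * (1 - u) ^ (t - 1)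
      = Real.Gamma s * Real.Gamma t / Real.Gamma (s + t) := by
  have key := Complex.Gamma_mul_Gamma_eq_betaIntegral (s := (s:ℂ)) (t := (t:ℂ))
    (by simpa using hs) (by simpa using ht)
  have h2 : Complex.betaIntegral (s:ℂ) (t:ℂ)
      = ((∫ u in (0:ℝ)..1, u ^ (s-1) * (1-u) ^ (t-1) : ℝ) : ℂ) := by
    rw [Complex.betaIntegral, ← intervalIntegral.integral_ofReal]
    refine intervalIntegral.integral_congr fun x hx => ?_
    rw [Set.uIcc_of_le (by norm_num : (0:ℝ) ≤ 1)] at hx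
    rw [Complex.ofReal_mul, Complex.ofReal_cpow hx.1,
      Complex.ofReal_cpow (by linarith [hx.2] : (0:ℝ) ≤ 1 - x)]
    push_cast
    ring
  rw [h2, ← Complex.ofReal_add, Complex.Gamma_ofReal, Complex.Gamma_ofReal,
    Complex.Gamma_ofReal, ← Complex.ofReal_mul, ← Complex.ofReal_mul] at key
  have h3 : Real.Gamma s * Real.Gamma t
      = Real.Gamma (s + t) * ∫ u in (0:ℝ)..1, u ^ (s-1) * (1-u) ^ (t-1) := by
    exact_mod_cast key
  have hΓ : Real.Gamma (s + t) ≠ 0 := (Real.Gamma_pos_of_pos (by linarith)).ne'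
  field_simp [h3]
  rw [h3]; ring

private lemma beta_value {α : ℝ} (hα0 : 0 < α) (hα1 : α < 1) :
    ∫ u in (0:ℝ)..1, u ^ (-α) * (1 - u) ^ (α - 1)
      = Real.Gamma (1 - α) * Real.Gamma α := by
  have h := beta_real (s := 1 - α) (t := α) (by linarith) hα0
  rw [show (1 - α) - 1 = -α by ring, show 1 - α + α = (1:ℝ) by ring, Real.Gamma_one,
    div_one] at h
  exact h

private lemma subst_left {α : ℝ} (hα1 : α < 1) (ψ : ℝ → ℝ) {a t : ℝ} (hat : a ≤ t) :
    ∫ x in a..t, ψ x * (t - x) ^ (-α)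
      = (t - a) ^ (1 - α) * ∫ u in (0:ℝ)..1, ψ (a + (t - a) * u) * (1 - u) ^ (-α) := by
  rcases eq_or_lt_of_le hat with rfl | hat'
  · simp [Real.zero_rpow (by linarith : (1:ℝ) - α ≠ 0)]
  · set c := t - a with hc
    have hc0 : 0 < c := by simp only [hc]; linarith
    have comp := intervalIntegral.integral_comp_add_mul
      (fun x => ψ x * (t - x) ^ (-α)) (a := 0) (b := 1) hc0.ne' a
    simp only [mul_zero, add_zero, mul_one, smul_eq_mul] at comp
    have hb1 : a + c * 1 = t := by simp [hc]
    rw [mul_one] at hb1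
    rw [hb1] at comp
    have hcongr : ∫ u in (0:ℝ)..1, ψ (a + c * u) * (t - (a + c * u)) ^ (-α)
        = ∫ u in (0:ℝ)..1, c ^ (-α) * (ψ (a + c * u) * (1 - u) ^ (-α)) := by
      refine intervalIntegral.integral_congr fun u hu => ?_
      rw [Set.uIcc_of_le (by norm_num : (0:ℝ) ≤ 1)] at hu
      have h1 : t - (a + c * u) = c * (1 - u) := by simp only [hc]; ring
      rw [h1, Real.mul_rpow hc0.le (by linarith [hu.2])]
      ring
    rw [hcongr, intervalIntegral.integral_const_mul] at comp
    have hB : (∫ x in a..t, ψ x * (t - x) ^ (-α))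
        = c * (c ^ (-α) * ∫ u in (0:ℝ)..1, ψ (a + c * u) * (1 - u) ^ (-α)) := by
      rw [comp]; field_simp
    have hcc : c * c ^ (-α) = c ^ (1 - α) := by
      rw [show (1:ℝ) - α = 1 + (-α) by ring, Real.rpow_add hc0, Real.rpow_one]
    rw [hB, ← mul_assoc, hcc]

private lemma subst_right {α : ℝ} (hα0 : 0 < α) (hα1 : α < 1) {x b : ℝ} (hxb : x < b) :
    ∫ t in x..b, (b - t) ^ (α - 1) * (t - x) ^ (-α)
      = Real.Gamma (1 - α) * Real.Gamma α := by
  set c := b - x with hc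
  have hc0 : 0 < c := by simp only [hc]; linarith
  have comp := intervalIntegral.integral_comp_add_mul
    (fun t => (b - t) ^ (α - 1) * (t - x) ^ (-α)) (a := 0) (b := 1) hc0.ne' x
  simp only [mul_zero, add_zero, mul_one, smul_eq_mul] at comp
  have hb1 : x + c = b := by simp [hc]
  rw [hb1] at comp
  have hcongr : ∫ u in (0:ℝ)..1, (b - (x + c * u)) ^ (α - 1) * ((x + c * u) - x) ^ (-α)
      = ∫ u in (0:ℝ)..1, (c ^ (α - 1) * c ^ (-α)) * (u ^ (-α) * (1 - u) ^ (α - 1)) := by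
    refine intervalIntegral.integral_congr fun u hu => ?_
    rw [Set.uIcc_of_le (by norm_num : (0:ℝ) ≤ 1)] at hu
    have h1 : b - (x + c * u) = c * (1 - u) := by simp only [hc]; ring
    have h2 : (x + c * u) - x = c * u := by ring
    rw [h1, h2, Real.mul_rpow hc0.le (by linarith [hu.2]), Real.mul_rpow hc0.le hu.1]
    ring
  rw [hcongr, intervalIntegral.integral_const_mul, beta_value hα0 hα1] at comp
  have h4 : (∫ t in x..b, (b - t) ^ (α - 1) * (t - x) ^ (-α))
      = c * (c ^ (α - 1) * c ^ (-α) * (Real.Gamma (1 - α) * Real.Gamma α)) := by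
    rw [comp]; field_simp
  calc ∫ t in x..b, (b - t) ^ (α - 1) * (t - x) ^ (-α)
      = c * (c ^ (α - 1) * c ^ (-α) * (Real.Gamma (1 - α) * Real.Gamma α)) := h4
    _ = (c ^ (1:ℝ) * c ^ (α - 1) * c ^ (-α)) * (Real.Gamma (1 - α) * Real.Gamma α) := by
        rw [Real.rpow_one]; ring
    _ = c ^ ((1:ℝ) + (α - 1) + (-α)) * (Real.Gamma (1 - α) * Real.Gamma α) := by
        rw [← Real.rpow_add hc0, ← Real.rpow_add hc0]
    _ = Real.Gamma (1 - α) * Real.Gamma α := by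
        norm_num

private lemma weight_integral {α : ℝ} (hα0 : 0 < α) {a b : ℝ} (hab : a ≤ b) :
    ∫ t in a..b, (b - t) ^ (α - 1) = (b - a) ^ α / α := by
  rw [intervalIntegral.integral_comp_sub_left (fun y => y ^ (α - 1)) b, sub_self]
  rw [integral_rpow (Or.inl (by linarith : (-1:ℝ) < α - 1))]
  rw [Real.zero_rpow (by linarith : α - 1 + 1 ≠ 0)]
  norm_num

private lemma kernel_integral {α : ℝ} (hα0 : 0 < α) (hα1 : α < 1) {a t : ℝ} (hat : a ≤ t) :
    ∫ x in a..t, (t - x) ^ (-α) = (t - a) ^ (1 - α) / (1 - α) := by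
  rw [intervalIntegral.integral_comp_sub_left (fun y => y ^ (-α)) t, sub_self]
  rw [integral_rpow (Or.inl (by linarith : (-1:ℝ) < -α))]
  rw [Real.zero_rpow (by intro h; rw [show -α + 1 = 1 - α by ring] at h; linarith)]
  rw [show -α + 1 = 1 - α by ring]
  norm_num

private lemma kernel_intble {α : ℝ} (hα0 : 0 < α) (hα1 : α < 1) (t a b : ℝ) :
    IntervalIntegrable (fun x => (t - x) ^ (-α)) volume a b := by
  have h := (intervalIntegrable_rpow' (by linarith : (-1:ℝ) < -α)
    (a := t - a) (b := t - b)).comp_sub_left t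
  simpa using h

private lemma weight_intble {α : ℝ} (hα0 : 0 < α) (b a c : ℝ) :
    IntervalIntegrable (fun t => (b - t) ^ (α - 1)) volume a c := by
  have h := (intervalIntegrable_rpow' (by linarith : (-1:ℝ) < α - 1)
    (a := b - a) (b := b - c)).comp_sub_left b
  simpa using h

private lemma cont_aux {α a b : ℝ} (hα0 : 0 < α) (hα1 : α < 1) (hab : a < b)
    (ψ : ℝ → ℝ) (hψ : Continuous ψ) :
    ContinuousOn (fun t => ∫ x in a..t, ψ x * (t - x) ^ (-α)) (Set.Icc a b) := by
  obtain ⟨M, hM⟩ := isCompact_Icc.exists_bound_of_continuousOn (hψ.continuousOn (s := Set.Icc a b))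
  set F : ℝ → ℝ → ℝ := fun t u => ψ (a + (t - a) * u) * (1 - u) ^ (-α) with hF
  have hcont2 : ContinuousOn
      (fun t => ∫ u in Set.Ioc (0:ℝ) 1, F t u) (Set.Icc a b) := by
    apply MeasureTheory.continuousOn_of_dominated (bound := fun u => |M| * (1 - u) ^ (-α))
    · intro t ht
      apply AEStronglyMeasurable.mul
      · exact ((hψ.comp (by continuity)).aestronglyMeasurable)
      · exact ((rpow_meas (by linarith : -α ≠ 0)).comp
          (measurable_const.sub measurable_id)).aestronglyMeasurable
    · intro t ht
      rw [ae_restrict_iff' measurableSet_Ioc]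
      refine Filter.Eventually.of_forall fun u hu => ?_
      have harg : a + (t - a) * u ∈ Set.Icc a b := by
        constructor
        · nlinarith [ht.1, hu.1.le]
        · nlinarith [ht.2, ht.1, hu.1.le, hu.2]
      have h1 : (0:ℝ) ≤ (1 - u) ^ (-α) := Real.rpow_nonneg (by linarith [hu.2]) _
      rw [norm_mul, Real.norm_of_nonneg h1]
      have := hM _ harg
      have hM' : M ≤ |M| := le_abs_self M
      exact mul_le_mul_of_nonneg_right (le_trans this hM') h1
    · refine Integrable.const_mul ?_ _
      exact ((intervalIntegrable_rpow' (by linarith : (-1:ℝ) < -α)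
        (a := 1) (b := 0)).comp_sub_left 1).1.mono_set (by norm_num)
    · refine Filter.Eventually.of_forall fun u => ?_
      exact ((hψ.comp (by continuity)).mul continuous_const).continuousOn
  have hrp : Continuous (fun t : ℝ => (t - a) ^ (1 - α)) :=
    (continuous_id.sub continuous_const).rpow_const fun x => Or.inr (by linarith)
  refine ContinuousOn.congr (hrp.continuousOn.mul hcont2) fun t ht => ?_
  have := subst_left (α := α) hα1 ψ ht.1
  rw [this, intervalIntegral.integral_of_le (by norm_num : (0:ℝ) ≤ 1)]
  rfl

private lemma key_swap {α a b : ℝ} (hα0 : 0 < α) (hα1 : α < 1) (hab : a < b)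
    (ψ : ℝ → ℝ) (hψ : Continuous ψ) (M : ℝ) (hM : ∀ y, ‖ψ y‖ ≤ M) :
    ∫ t in a..b, (b - t) ^ (α - 1) * ∫ x in a..t, ψ x * (t - x) ^ (-α)
      = Real.Gamma (1 - α) * Real.Gamma α * ∫ x in a..b, ψ x := by
  have hM0 : 0 ≤ M := le_trans (norm_nonneg _) (hM a)
  set μ : Measure ℝ := volume.restrict (Set.Ioc a b) with hμdef
  set K : ℝ → ℝ → ℝ := fun t x =>
    if x < t then (b - t) ^ (α - 1) * (ψ x * (t - x) ^ (-α)) else 0 with hK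
  -- measurability on the product
  have hKm : AEStronglyMeasurable (Function.uncurry K) (μ.prod μ) := by
    apply Measurable.aestronglyMeasurable
    apply Measurable.ite (measurableSet_lt measurable_snd measurable_fst)
    · exact (((rpow_meas (by linarith : α - 1 ≠ 0)).comp
        (measurable_const.sub measurable_fst)).mul
        ((hψ.measurable.comp measurable_snd).mul
        ((rpow_meas (by linarith : -α ≠ 0)).comp (measurable_fst.sub measurable_snd))))
    · exact measurable_const
  -- sections in x are integrable
  have hsec : ∀ t ∈ Set.Ioc a b, Integrable (fun x => K t x) μ := by
    intro t ht
    have hbt : (0:ℝ) ≤ (b - t) ^ (α - 1) := Real.rpow_nonneg (by linarith [ht.2]) _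
    apply Integrable.mono' (g := fun x => ((b - t) ^ (α - 1) * M) * ‖(t - x) ^ (-α)‖)
    · exact (((kernel_intble hα0 hα1 t a b).norm).1.const_mul _)
    · apply Measurable.aestronglyMeasurable
      apply Measurable.ite measurableSet_Iio
      · exact (measurable_const.mul ((hψ.measurable).mul
          ((rpow_meas (by linarith : -α ≠ 0)).comp (measurable_const.sub measurable_id))))
      · exact measurable_const
    · refine Filter.Eventually.of_forall fun x => ?_
      by_cases hx : x < t
      · simp only [hK, if_pos hx]
        have htx : (0:ℝ) ≤ (t - x) ^ (-α) := Real.rpow_nonneg (by linarith) _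
        rw [norm_mul, norm_mul, Real.norm_of_nonneg hbt, Real.norm_of_nonneg htx]
        nlinarith [mul_nonneg (mul_nonneg hbt htx) (sub_nonneg.2 (hM x))]
      · simp only [hK, if_neg hx, norm_zero]
        positivity
  have hsec' : ∀ᵐ t ∂μ, Integrable (fun x => K t x) μ := by
    rw [hμdef, ae_restrict_iff' measurableSet_Ioc]
    exact Filter.Eventually.of_forall hsec
  -- the norm-integral in t is integrable
  have hnorm : Integrable (fun t => ∫ x, ‖K t x‖ ∂μ) μ := by
    apply Integrable.mono'
      (g := fun t => (M * ((b - a) ^ (1 - α) / (1 - α))) * ‖(b - t) ^ (α - 1)‖)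
    · exact ((weight_intble hα0 b a b).norm).1.const_mul _
    · exact hKm.norm.integral_prod_right'
    · rw [hμdef, ae_restrict_iff' measurableSet_Ioc]
      refine Filter.Eventually.of_forall fun t ht => ?_
      have hbt : (0:ℝ) ≤ (b - t) ^ (α - 1) := Real.rpow_nonneg (by linarith [ht.2]) _
      have h0 : (0:ℝ) ≤ ∫ x, ‖K t x‖ ∂μ := integral_nonneg fun x => norm_nonneg _
      rw [Real.norm_of_nonneg h0]
      -- bound the inner integral
      have hle : (∫ x, ‖K t x‖ ∂μ) ≤ ∫ x, ((b - t) ^ (α - 1) * M) *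
          (Set.Iio t).indicator (fun x => (t - x) ^ (-α)) x ∂μ := by
        apply integral_mono_of_nonneg
        · exact Filter.Eventually.of_forall fun x => norm_nonneg _
        · exact (((kernel_intble hα0 hα1 t a b).1.indicator
            measurableSet_Iio).const_mul _)
        · refine Filter.Eventually.of_forall fun x => ?_
          by_cases hx : x < t
          · simp only [hK, if_pos hx, Set.indicator_of_mem (Set.mem_Iio.2 hx)]
            have htx : (0:ℝ) ≤ (t - x) ^ (-α) := Real.rpow_nonneg (by linarith) _
            rw [norm_mul, norm_mul, Real.norm_of_nonneg hbt, Real.norm_of_nonneg htx]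
            nlinarith [mul_nonneg (mul_nonneg hbt htx) (sub_nonneg.2 (hM x))]
          · simp [hK, if_neg hx, Set.indicator_of_notMem (fun h => hx (Set.mem_Iio.1 h))]
      have hcomp : (∫ x, ((b - t) ^ (α - 1) * M) *
          (Set.Iio t).indicator (fun x => (t - x) ^ (-α)) x ∂μ)
          = ((b - t) ^ (α - 1) * M) * ((t - a) ^ (1 - α) / (1 - α)) := by
        rw [MeasureTheory.integral_const_mul, hμdef, setIntegral_indicator measurableSet_Iio]
        have hset : Set.Ioc a b ∩ Set.Iio t = Set.Ioo a t := by
          ext x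
          simp only [Set.mem_inter_iff, Set.mem_Ioc, Set.mem_Iio, Set.mem_Ioo]
          exact ⟨fun ⟨⟨h1, h2⟩, h3⟩ => ⟨h1, h3⟩,
            fun ⟨h1, h3⟩ => ⟨⟨h1, le_trans h3.le ht.2⟩, h3⟩⟩
        rw [hset, setIntegral_congr_set Ioo_ae_eq_Ioc,
          ← intervalIntegral.integral_of_le ht.1.le, kernel_integral hα0 hα1 ht.1.le]
      rw [hcomp] at hle
      rw [Real.norm_of_nonneg hbt]
      have h1 : (t - a) ^ (1 - α) ≤ (b - a) ^ (1 - α) :=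
        Real.rpow_le_rpow (by linarith [ht.1.le]) (by linarith [ht.2]) (by linarith)
      have h2 : (0:ℝ) < 1 - α := by linarith
      have h3 : (t - a) ^ (1 - α) / (1 - α) ≤ (b - a) ^ (1 - α) / (1 - α) := by
        gcongr
      nlinarith [hle, mul_le_mul_of_nonneg_left h3 (mul_nonneg hbt hM0)]
  have hKint : Integrable (Function.uncurry K) (μ.prod μ) := by
    rw [integrable_prod_iff hKm]
    exact ⟨hsec', hnorm⟩
  -- first rewrite: the LHS as an iterated integral of K
  have h1 : ∀ t ∈ Set.Ioc a b,
      ∫ x, K t x ∂μ = (b - t) ^ (α - 1) * ∫ x in a..t, ψ x * (t - x) ^ (-α) := by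
    intro t ht
    have hind : ∀ x, K t x =
        (Set.Iio t).indicator (fun x => (b - t) ^ (α - 1) * (ψ x * (t - x) ^ (-α))) x := by
      intro x
      by_cases hx : x < t
      · simp [hK, hx, Set.indicator_of_mem (Set.mem_Iio.2 hx)]
      · simp [hK, hx, Set.indicator_of_notMem (fun h => hx (Set.mem_Iio.1 h))]
    calc ∫ x, K t x ∂μ
        = ∫ x, (Set.Iio t).indicator
            (fun x => (b - t) ^ (α - 1) * (ψ x * (t - x) ^ (-α))) x ∂μ := by
          exact integral_congr_ae (Filter.Eventually.of_forall hind)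
      _ = ∫ x in Set.Ioc a b ∩ Set.Iio t,
            (b - t) ^ (α - 1) * (ψ x * (t - x) ^ (-α)) := by
          rw [hμdef, setIntegral_indicator measurableSet_Iio]
      _ = ∫ x in Set.Ioo a t, (b - t) ^ (α - 1) * (ψ x * (t - x) ^ (-α)) := by
          have hset : Set.Ioc a b ∩ Set.Iio t = Set.Ioo a t := by
            ext x
            simp only [Set.mem_inter_iff, Set.mem_Ioc, Set.mem_Iio, Set.mem_Ioo]
            exact ⟨fun ⟨⟨u1, u2⟩, u3⟩ => ⟨u1, u3⟩,
              fun ⟨u1, u3⟩ => ⟨⟨u1, le_trans u3.le ht.2⟩, u3⟩⟩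
          rw [hset]
      _ = ∫ x in Set.Ioc a t, (b - t) ^ (α - 1) * (ψ x * (t - x) ^ (-α)) :=
          setIntegral_congr_set Ioo_ae_eq_Ioc
      _ = ∫ x in a..t, (b - t) ^ (α - 1) * (ψ x * (t - x) ^ (-α)) :=
          (intervalIntegral.integral_of_le ht.1.le).symm
      _ = (b - t) ^ (α - 1) * ∫ x in a..t, ψ x * (t - x) ^ (-α) :=
          intervalIntegral.integral_const_mul _ _
  -- second rewrite: the t-integral for fixed x
  have h2 : ∀ x ∈ Set.Ioo a b,
      ∫ t, K t x ∂μ = ψ x * (Real.Gamma (1 - α) * Real.Gamma α) := by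
    intro x hx
    have hind : ∀ t, K t x =
        (Set.Ioi x).indicator (fun t => (b - t) ^ (α - 1) * (ψ x * (t - x) ^ (-α))) t := by
      intro t
      by_cases hxt : x < t
      · simp [hK, hxt, Set.indicator_of_mem (Set.mem_Ioi.2 hxt)]
      · simp [hK, hxt, Set.indicator_of_notMem (fun h => hxt (Set.mem_Ioi.1 h))]
    calc ∫ t, K t x ∂μ
        = ∫ t, (Set.Ioi x).indicator
            (fun t => (b - t) ^ (α - 1) * (ψ x * (t - x) ^ (-α))) t ∂μ :=
          integral_congr_ae (Filter.Eventually.of_forall hind)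
      _ = ∫ t in Set.Ioc a b ∩ Set.Ioi x,
            (b - t) ^ (α - 1) * (ψ x * (t - x) ^ (-α)) := by
          rw [hμdef, setIntegral_indicator measurableSet_Ioi]
      _ = ∫ t in Set.Ioc x b, (b - t) ^ (α - 1) * (ψ x * (t - x) ^ (-α)) := by
          have hset : Set.Ioc a b ∩ Set.Ioi x = Set.Ioc x b := by
            ext t
            simp only [Set.mem_inter_iff, Set.mem_Ioc, Set.mem_Ioi]
            exact ⟨fun ⟨⟨u1, u2⟩, u3⟩ => ⟨u3, u2⟩,
              fun ⟨u3, u2⟩ => ⟨⟨lt_trans hx.1 u3, u2⟩, u3⟩⟩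
          rw [hset]
      _ = ∫ t in x..b, ψ x * ((b - t) ^ (α - 1) * (t - x) ^ (-α)) := by
          rw [← intervalIntegral.integral_of_le hx.2.le]
          exact intervalIntegral.integral_congr fun t _ => by ring
      _ = ψ x * ∫ t in x..b, (b - t) ^ (α - 1) * (t - x) ^ (-α) :=
          intervalIntegral.integral_const_mul _ _
      _ = ψ x * (Real.Gamma (1 - α) * Real.Gamma α) := by
          rw [subst_right hα0 hα1 hx.2]
  -- put everything together
  have hae : ∀ᵐ x ∂μ, x ∈ Set.Ioo a b := by
    have : μ = volume.restrict (Set.Ioo a b) :=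
      (Measure.restrict_congr_set Ioo_ae_eq_Ioc).symm
    rw [this]
    exact ae_restrict_mem measurableSet_Ioo
  calc ∫ t in a..b, (b - t) ^ (α - 1) * ∫ x in a..t, ψ x * (t - x) ^ (-α)
      = ∫ t in Set.Ioc a b, (b - t) ^ (α - 1) * ∫ x in a..t, ψ x * (t - x) ^ (-α) :=
        intervalIntegral.integral_of_le hab.le
    _ = ∫ t, (∫ x, K t x ∂μ) ∂μ := by
        rw [hμdef]
        refine (setIntegral_congr_fun measurableSet_Ioc fun t ht => ?_).symm
        exact h1 t ht
    _ = ∫ x, (∫ t, K t x ∂μ) ∂μ := integral_integral_swap hKint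
    _ = ∫ x, ψ x * (Real.Gamma (1 - α) * Real.Gamma α) ∂μ := by
        refine integral_congr_ae ?_
        filter_upwards [hae] with x hx using h2 x hx
    _ = (∫ x, ψ x ∂μ) * (Real.Gamma (1 - α) * Real.Gamma α) := MeasureTheory.integral_mul_const _ _
    _ = Real.Gamma (1 - α) * Real.Gamma α * ∫ x in a..b, ψ x := by
        rw [hμdef, ← intervalIntegral.integral_of_le hab.le]
        ring

theorem stmt_17 (α a b : ℝ) (hα0 : 0 < α) (hα1 : α ≤ 1) (hab : a < b)
    (φ φ' : ℝ → ℝ)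
    (hderiv : ∀ x ∈ Set.Icc a b, HasDerivWithinAt φ (φ' x) (Set.Icc a b) x)
    (hcont : ContinuousOn φ' (Set.Icc a b)) :
    ContinuousOn (caputoD α a φ') (Set.Icc a b) ∧
    (α < 1 → caputoD α a φ' a = 0) ∧
    ∃ ξ ∈ Set.Icc a b,
      φ b = φ a + (1 / Real.Gamma (α + 1)) * caputoD α a φ' ξ * (b - a) ^ α := by
  have hφc : ContinuousOn φ (Set.Icc a b) := fun x hx => (hderiv x hx).continuousWithinAt
  have hIoo : ∀ x ∈ Set.Ioo a b, HasDerivAt φ (φ' x) x := fun x hx =>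
    (hderiv x (Set.Ioo_subset_Icc_self hx)).hasDerivAt (Icc_mem_nhds hx.1 hx.2)
  rcases eq_or_lt_of_le hα1 with rfl | hα1'
  · -- the case α = 1
    have hcap : caputoD 1 a φ' = φ' := by funext t; simp [caputoD]
    refine ⟨by rw [hcap]; exact hcont, fun h => absurd h (lt_irrefl 1), ?_⟩
    obtain ⟨c, hc, hc'⟩ := exists_hasDerivAt_eq_slope φ φ' hab hφc hIoo
    refine ⟨c, Set.Ioo_subset_Icc_self hc, ?_⟩
    have h2 : Real.Gamma (1 + 1) = 1 := by
      rw [Real.Gamma_add_one one_ne_zero, Real.Gamma_one, mul_one]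
    rw [hcap, h2, Real.rpow_one, hc']
    have hba : b - a ≠ 0 := sub_ne_zero.2 hab.ne'
    field_simp
    ring
  -- the case α < 1
  have hne : α ≠ 1 := ne_of_lt hα1'
  set ψ : ℝ → ℝ := fun x => φ' (max a (min x b)) with hψdef
  have hproj : ∀ x : ℝ, max a (min x b) ∈ Set.Icc a b := fun x =>
    ⟨le_max_left _ _, max_le hab.le (min_le_right _ _)⟩
  have hψcont : Continuous ψ :=
    hcont.comp_continuous (continuous_const.max (continuous_id.min continuous_const)) hproj
  have hψeq : ∀ x ∈ Set.Icc a b, ψ x = φ' x := fun x hx => by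
    simp only [hψdef]; rw [min_eq_left hx.2, max_eq_right hx.1]
  obtain ⟨M, hM⟩ := isCompact_Icc.exists_bound_of_continuousOn hcont
  have hMg : ∀ y, ‖ψ y‖ ≤ M := fun y => hM _ (hproj y)
  have hcapφ : ∀ t, caputoD α a φ' t
      = (1 / Real.Gamma (1 - α)) * ∫ x in a..t, φ' x * (t - x) ^ (-α) := fun t => if_neg hne
  set g : ℝ → ℝ := fun t => (1 / Real.Gamma (1 - α)) * ∫ x in a..t, ψ x * (t - x) ^ (-α)
    with hg
  have hcapeq : ∀ t ∈ Set.Icc a b, caputoD α a φ' t = g t := by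
    intro t ht
    rw [hcapφ t, hg]
    congr 1
    refine intervalIntegral.integral_congr fun x hx => ?_
    rw [Set.uIcc_of_le ht.1] at hx
    rw [hψeq x ⟨hx.1, le_trans hx.2 ht.2⟩]
  have hgcont : ContinuousOn g (Set.Icc a b) :=
    continuousOn_const.mul (cont_aux hα0 hα1' hab ψ hψcont)
  refine ⟨ContinuousOn.congr hgcont hcapeq, ?_, ?_⟩
  · intro _
    rw [hcapφ a]
    simp
  -- FTC and the key identity
  have hftc : ∫ x in a..b, φ' x = φ b - φ a := by
    apply intervalIntegral.integral_eq_sub_of_hasDeriv_right_of_le hab.le hφc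
    · intro x hx; exact (hIoo x hx).hasDerivWithinAt
    · exact ContinuousOn.intervalIntegrable (by rwa [Set.uIcc_of_le hab.le])
  have hψint : ∫ x in a..b, ψ x = φ b - φ a := by
    rw [← hftc]
    refine intervalIntegral.integral_congr fun x hx => ?_
    rw [Set.uIcc_of_le hab.le] at hx
    exact hψeq x hx
  have hkey := key_swap hα0 hα1' hab ψ hψcont M hMg
  rw [hψint] at hkey
  have hΓ1α : 0 < Real.Gamma (1 - α) := Real.Gamma_pos_of_pos (by linarith)
  have hΓα : 0 < Real.Gamma α := Real.Gamma_pos_of_pos hα0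
  have hwg : ∫ t in a..b, (b - t) ^ (α - 1) * g t = Real.Gamma α * (φ b - φ a) := by
    have hptw : ∀ t ∈ Set.uIcc a b, (b - t) ^ (α - 1) * g t
        = (1 / Real.Gamma (1 - α))
          * ((b - t) ^ (α - 1) * ∫ x in a..t, ψ x * (t - x) ^ (-α)) := fun t _ => by
      rw [hg]; ring
    rw [intervalIntegral.integral_congr hptw, intervalIntegral.integral_const_mul, hkey]
    field_simp
  -- integrability of the weighted functions
  have hwint : ∀ c : ℝ, IntervalIntegrable (fun t => (b - t) ^ (α - 1) * c) volume a b :=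
    fun c => (weight_intble hα0 b a b).mul_const c
  obtain ⟨C, hC⟩ := isCompact_Icc.exists_bound_of_continuousOn hgcont
  have hwgint : IntervalIntegrable (fun t => (b - t) ^ (α - 1) * g t) volume a b := by
    constructor
    · apply Integrable.mono' (((weight_intble hα0 b a b).norm.1).const_mul C)
      · apply AEStronglyMeasurable.mul
        · exact ((rpow_meas (by linarith : α - 1 ≠ 0)).comp
            (measurable_const.sub measurable_id)).aestronglyMeasurable
        · exact (hgcont.mono Set.Ioc_subset_Icc_self).aestronglyMeasurable measurableSet_Ioc
      · rw [ae_restrict_iff' measurableSet_Ioc]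
        refine Filter.Eventually.of_forall fun t ht => ?_
        have hbt : (0:ℝ) ≤ (b - t) ^ (α - 1) := Real.rpow_nonneg (by linarith [ht.2]) _
        rw [norm_mul, Real.norm_of_nonneg hbt]
        have h1 := hC t ⟨ht.1.le, ht.2⟩
        nlinarith [mul_nonneg hbt (sub_nonneg.2 h1)]
    · rw [Set.Ioc_eq_empty (by linarith : ¬ b < a)]
      exact integrableOn_empty
  -- min, max and the intermediate value theorem
  obtain ⟨tmin, htmin, hmin⟩ :=
    isCompact_Icc.exists_isMinOn (Set.nonempty_Icc.2 hab.le) hgcont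
  obtain ⟨tmax, htmax, hmax⟩ :=
    isCompact_Icc.exists_isMaxOn (Set.nonempty_Icc.2 hab.le) hgcont
  have hW : ∫ t in a..b, (b - t) ^ (α - 1) = (b - a) ^ α / α := weight_integral hα0 hab.le
  have hWpos : 0 < (b - a) ^ α / α := div_pos (Real.rpow_pos_of_pos (by linarith) _) hα0
  have hlow : g tmin * ((b - a) ^ α / α) ≤ Real.Gamma α * (φ b - φ a) := by
    rw [← hwg]
    have hm := intervalIntegral.integral_mono_on hab.le (hwint (g tmin)) hwgint
      (fun t ht => mul_le_mul_of_nonneg_left (isMinOn_iff.1 hmin t ht)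
        (Real.rpow_nonneg (by linarith [ht.2]) _))
    calc g tmin * ((b - a) ^ α / α)
        = ∫ t in a..b, (b - t) ^ (α - 1) * g tmin := by
          rw [intervalIntegral.integral_mul_const, hW]; ring
      _ ≤ _ := hm
  have hhigh : Real.Gamma α * (φ b - φ a) ≤ g tmax * ((b - a) ^ α / α) := by
    rw [← hwg]
    have hm := intervalIntegral.integral_mono_on hab.le hwgint (hwint (g tmax))
      (fun t ht => mul_le_mul_of_nonneg_left (isMaxOn_iff.1 hmax t ht)
        (Real.rpow_nonneg (by linarith [ht.2]) _))
    calc ∫ t in a..b, (b - t) ^ (α - 1) * g t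
        ≤ ∫ t in a..b, (b - t) ^ (α - 1) * g tmax := hm
      _ = g tmax * ((b - a) ^ α / α) := by
          rw [intervalIntegral.integral_mul_const, hW]; ring
  set V : ℝ := Real.Gamma α * (φ b - φ a) / ((b - a) ^ α / α) with hV
  have hV1 : g tmin ≤ V := (le_div_iff₀ hWpos).2 hlow
  have hV2 : V ≤ g tmax := (div_le_iff₀ hWpos).2 hhigh
  have hsub : Set.uIcc tmin tmax ⊆ Set.Icc a b := by
    rw [Set.uIcc]
    exact Set.Icc_subset_Icc (le_min htmin.1 htmax.1) (max_le htmin.2 htmax.2)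
  have hVmem : V ∈ Set.uIcc (g tmin) (g tmax) := by
    rw [Set.uIcc_of_le (le_trans hV1 hV2)]
    exact ⟨hV1, hV2⟩
  obtain ⟨ξ, hξ, hgξ⟩ := intermediate_value_uIcc (hgcont.mono hsub) hVmem
  refine ⟨ξ, hsub hξ, ?_⟩
  rw [hcapeq ξ (hsub hξ), hgξ, hV]
  have hba : (0:ℝ) < (b - a) ^ α := Real.rpow_pos_of_pos (by linarith) _
  rw [Real.Gamma_add_one hα0.ne']
  field_simp
  ring
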